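/- arXiv:1002.4372 — 2 statements merged into one kernel-verified Lean document; each statement's English description precedes it below -/
import Mathlib

section
/- If f : X → Y is a Zariski fibration of schemes of finite type over ℂ, then there exists a finite stratification of Y by connected locally closed subschemes Y_i such that for each i the restriction of f over Y_i is a trivial fibration, i.e. there is a scheme F_i and an isomorphism f^{-1}(Y_i) ≅ Y_i × F_i commuting with the projections to Y_i. -/
open AlgebraicGeometry CategoryTheory CategoryTheory.Limits

noncomputable section

/-- The base scheme `Spec ℂ`. -/
abbrev SpecC : Scheme := Spec (CommRingCat.of ℂ)

/-- A morphism `f : X ⟶ Y` of schemes over `ℂ` is a Zariski fibration if `Y` is covered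
by open subsets `U` over which `f` is trivial: there is a scheme `F` (over `ℂ`) and an
isomorphism `f⁻¹(U) ≅ U × F` commuting with the projections to `U`, where `U × F` is the
product in schemes over `ℂ`. -/
def IsZariskiFibration {X Y : Scheme} (stY : Y ⟶ SpecC) (f : X ⟶ Y) : Prop :=
  ∀ y : Y, ∃ U : Y.Opens, y ∈ U ∧
    ∃ (F : Scheme) (stF : F ⟶ SpecC)
      (e : pullback f U.ι ≅ pullback (U.ι ≫ stY) stF),
      e.hom ≫ pullback.fst (U.ι ≫ stY) stF = pullback.snd f U.ι

section Aux

open TopologicalSpace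

variable {α : Type*} [TopologicalSpace α]

lemma aux_open_connectedComponent [NoetherianSpace α] (x : α) :
    IsOpen (connectedComponent x) := by
  have hfin := NoetherianSpace.finite_irreducibleComponents (α := α)
  have hcl : IsClosed ((connectedComponent x)ᶜ) := by
    have : (connectedComponent x)ᶜ =
        ⋃ s ∈ {s ∈ irreducibleComponents α | ¬ s ⊆ connectedComponent x}, s := by
      ext y
      constructor
      · intro hy
        exact Set.mem_biUnion
          (show irreducibleComponent y ∈ _ from
            ⟨irreducibleComponent_mem_irreducibleComponents y,
              fun hsub => hy (hsub mem_irreducibleComponent)⟩)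
          mem_irreducibleComponent
      · rintro hy
        simp only [Set.mem_iUnion] at hy
        obtain ⟨s, ⟨hs, hns⟩, hys⟩ := hy
        intro hyc
        apply hns
        have hpc : IsPreconnected s := hs.1.isConnected.isPreconnected
        have h1 : s ⊆ connectedComponent y := hpc.subset_connectedComponent hys
        have h2 : connectedComponent y = connectedComponent x :=
          (connectedComponent_eq hyc).symm
        rwa [h2] at h1
    rw [this]
    exact (hfin.subset (Set.sep_subset _ _)).isClosed_biUnion
      (fun s hs => isClosed_of_mem_irreducibleComponents s hs.1)
  simpa using hcl.isOpen_compl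

lemma aux_finite_connectedComponents [NoetherianSpace α] :
    (Set.range (connectedComponent (α := α))).Finite := by
  have hc : IsCompact (Set.univ : Set α) := NoetherianSpace.isCompact _
  obtain ⟨t, ht⟩ := hc.elim_finite_subcover connectedComponent
    (fun x => aux_open_connectedComponent x)
    (fun y _ => Set.mem_iUnion.mpr ⟨y, mem_connectedComponent⟩)
  refine ((t.finite_toSet.image connectedComponent).subset ?_)
  rintro _ ⟨y, rfl⟩
  obtain ⟨x, hx, hyx⟩ := Set.mem_iUnion₂.mp (ht (Set.mem_univ y))
  exact ⟨x, hx, connectedComponent_eq hyx⟩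

lemma aux_subscheme (Y : Scheme) (W Ω : Y.Opens) (hW : IsAffineOpen W) (hΩW : Ω ≤ W)
    (Z : Set Y) (hZ : IsClosed Z) (C : Set Y) (hC : C = Z ∩ Ω) (hconn : _root_.IsConnected C) :
    ∃ (S : Scheme) (inc : S ⟶ Y), IsImmersion inc ∧ ConnectedSpace S ∧
      Set.range inc.base = C := by
  classical
  set R := Γ(Y, W)
  set φ : Spec R ⟶ Y := hW.fromSpec with hφ
  have hφrange : Set.range φ.base = (W : Set Y) := hW.range_fromSpec
  have hCW : C ⊆ (W : Set Y) := by
    rw [hC]; exact (Set.inter_subset_right).trans hΩW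
  set C' : Set (Spec R) := φ.base ⁻¹' C with hC'
  set I : Ideal R := PrimeSpectrum.vanishingIdeal C' with hI
  set q : R ⟶ CommRingCat.of (R ⧸ I) := CommRingCat.ofHom (Ideal.Quotient.mk I) with hq
  set ψ : Spec (CommRingCat.of (R ⧸ I)) ⟶ Y := Spec.map q ≫ φ with hψ
  set U' : (Spec (CommRingCat.of (R ⧸ I))).Opens := ψ ⁻¹ᵁ Ω with hU'
  have hemb : Topology.IsEmbedding φ.base := φ.isEmbedding
  have hq_range : Set.range (Spec.map q).base = PrimeSpectrum.zeroLocus (I : Set R) := by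
    rw [Spec.map_base]
    show Set.range (PrimeSpectrum.comap (Ideal.Quotient.mk I)) = _
    rw [range_comap_of_surjective _ _ Ideal.Quotient.mk_surjective,
      Ideal.mk_ker]
  have hzl : PrimeSpectrum.zeroLocus (I : Set R) = closure C' :=
    PrimeSpectrum.zeroLocus_vanishingIdeal_eq_closure C'
  have himg : φ.base '' (φ.base ⁻¹' C) = C := by
    rw [Set.image_preimage_eq_inter_range, hφrange, Set.inter_eq_left]
    exact hCW
  have hclC' : closure C' = φ.base ⁻¹' (closure C) := by
    rw [hC', hemb.closure_eq_preimage_closure_image, himg]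
  have hψ_range : Set.range ψ.base = closure C ∩ (W : Set Y) := by
    rw [hψ, Scheme.Hom.comp_base]
    show Set.range (φ.base ∘ (Spec.map q).base) = _
    rw [Set.range_comp, hq_range, hzl, hclC', Set.image_preimage_eq_inter_range, hφrange]
  have hrange : Set.range (U'.ι ≫ ψ).base = C := by
    rw [Scheme.Hom.comp_base]
    show Set.range (ψ.base ∘ U'.ι.base) = _
    rw [Set.range_comp, Scheme.Opens.range_ι]
    show ψ.base '' (ψ.base ⁻¹' (Ω : Set Y)) = C
    rw [Set.image_preimage_eq_inter_range, hψ_range]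
    have h2 : closure C ⊆ Z := by
      rw [hC]; exact hZ.closure_subset_iff.mpr Set.inter_subset_left
    apply Set.Subset.antisymm
    · intro x hx
      rw [hC]
      exact ⟨h2 hx.2.1, hx.1⟩
    · intro x hx
      have hxZ : x ∈ Z ∩ (Ω : Set Y) := hC ▸ hx
      exact ⟨hxZ.2, subset_closure hx, hΩW hxZ.2⟩
  refine ⟨U', U'.ι ≫ ψ, inferInstance, ?_, hrange⟩
  have hembi : Topology.IsEmbedding (U'.ι ≫ ψ).base := (U'.ι ≫ ψ).isEmbedding
  have e := hembi.toHomeomorph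
  have : ConnectedSpace ↥(Set.range (U'.ι ≫ ψ).base) := by
    rw [hrange]
    exact Subtype.connectedSpace hconn
  exact e.symm.surjective.connectedSpace e.symm.continuous

lemma aux_transport {X Y T U F : Scheme} (stY : Y ⟶ SpecC) (f : X ⟶ Y)
    (u : U ⟶ Y) (j : T ⟶ U) (g : T ⟶ Y) (hg : j ≫ u = g) (stF : F ⟶ SpecC)
    (e : pullback f u ≅ pullback (u ≫ stY) stF)
    (he : e.hom ≫ pullback.fst (u ≫ stY) stF = pullback.snd f u) :
    ∃ e' : pullback f g ≅ pullback (g ≫ stY) stF,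
      e'.hom ≫ pullback.fst (g ≫ stY) stF = pullback.snd f g := by
  subst hg
  let β : pullback (pullback.snd f u) j ⟶ pullback (pullback.fst (u ≫ stY) stF) j :=
    pullback.map _ _ _ _ e.hom (𝟙 T) (𝟙 U) (by simp [he]) (by simp)
  have hβ : IsIso β := inferInstanceAs (IsIso (pullback.map _ _ _ _ _ _ _ _ _))
  let e' : pullback f (j ≫ u) ≅ pullback ((j ≫ u) ≫ stY) stF :=
    (pullbackLeftPullbackSndIso f u j).symm ≪≫ asIso β ≪≫
      pullbackSymmetry _ _ ≪≫ pullbackRightPullbackFstIso (u ≫ stY) stF j ≪≫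
      pullback.congrHom (Category.assoc _ _ _).symm rfl
  refine ⟨e', ?_⟩
  simp [e', β, pullback.congrHom]
  erw [pullback.lift_fst]
  simp
  erw [pullback.lift_snd]
  simp

lemma aux_noeth (Y : Scheme) (stY : Y ⟶ SpecC) (h : LocallyOfFiniteType stY)
    (W : Y.Opens) (hW : IsAffineOpen W) : IsNoetherianRing Γ(Y, W) := by
  have hft : RingHom.FiniteType (stY.appLE ⊤ W le_top).hom :=
    HasRingHomProperty.appLE (P := @LocallyOfFiniteType) stY h
      ⟨⊤, isAffineOpen_top _⟩ ⟨W, hW⟩ le_top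
  haveI : IsNoetherianRing Γ(SpecC, ⊤) := by
    apply isNoetherianRing_of_ringEquiv ℂ
    exact (Scheme.ΓSpecIso (CommRingCat.of ℂ)).symm.commRingCatIsoToRingEquiv
  letI := (stY.appLE ⊤ W le_top).hom.toAlgebra
  haveI : Algebra.FiniteType Γ(SpecC, ⊤) Γ(Y, W) := hft
  exact Algebra.FiniteType.isNoetherianRing Γ(SpecC, ⊤) Γ(Y, W)

end Aux

/-- If `f : X → Y` is a Zariski fibration of schemes of finite type over
`ℂ`, then there is a finite stratification of `Y` by connected locally closed subschemes
`S i` (every point of `Y` lies in exactly one stratum) such that over each `S i` the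
fibration `f` is trivial: there is a scheme `F` and an isomorphism `f⁻¹(S i) ≅ S i × F`
commuting with the projections to `S i`. -/
theorem stmt_2 (X Y : Scheme) (stX : X ⟶ SpecC) (stY : Y ⟶ SpecC)
    (hlftX : LocallyOfFiniteType stX) (hqcX : QuasiCompact stX)
    (hlftY : LocallyOfFiniteType stY) (hqcY : QuasiCompact stY)
    (f : X ⟶ Y) (hf : f ≫ stY = stX) (hzf : IsZariskiFibration stY f) :
    ∃ (n : ℕ) (S : Fin n → Scheme) (inc : ∀ i, S i ⟶ Y),
      (∀ i, IsImmersion (inc i)) ∧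
      (∀ i, ConnectedSpace (S i)) ∧
      (∀ y : Y, ∃! i, y ∈ Set.range (inc i).base) ∧
      (∀ i, ∃ (F : Scheme) (stF : F ⟶ SpecC)
        (e : pullback f (inc i) ≅ pullback (inc i ≫ stY) stF),
        e.hom ≫ pullback.fst (inc i ≫ stY) stF = pullback.snd f (inc i)) := by
  classical
  haveI : CompactSpace Y := QuasiCompact.compactSpace_of_compactSpace stY
  -- choose affine opens inside trivializing opens
  have hchoice : ∀ y : Y, ∃ WU : Y.Opens × Y.Opens, y ∈ WU.1 ∧ IsAffineOpen WU.1 ∧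
      WU.1 ≤ WU.2 ∧
      ∃ (F : Scheme) (stF : F ⟶ SpecC)
        (e : pullback f WU.2.ι ≅ pullback (WU.2.ι ≫ stY) stF),
        e.hom ≫ pullback.fst (WU.2.ι ≫ stY) stF = pullback.snd f WU.2.ι := by
    intro y
    obtain ⟨U, hyU, F, stF, e, he⟩ := hzf y
    obtain ⟨W, hWaff, hyW, hWU⟩ :=
      TopologicalSpace.Opens.isBasis_iff_nbhd.mp (Y.isBasis_affineOpens) hyU
    exact ⟨(W, U), hyW, hWaff, hWU, F, stF, e, he⟩
  choose WU hyW hWaff hWle hdata using hchoice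
  set Wo : Y → Y.Opens := fun y => (WU y).1 with hWo
  have hcover : (Set.univ : Set Y) ⊆ ⋃ y, (Wo y : Set Y) :=
    fun y _ => Set.mem_iUnion.mpr ⟨y, hyW y⟩
  obtain ⟨t, ht⟩ := CompactSpace.isCompact_univ.elim_finite_subcover
    (fun y => (Wo y : Set Y)) (fun y => (Wo y).2) hcover
  -- Noetherianity
  haveI : IsNoetherian Y := by
    apply (isNoetherian_iff_of_finite_iSup_eq_top
      (ι := ↥t) (S := fun k => ⟨Wo k.1, hWaff k.1⟩) ?_).mpr
    · intro k; exact aux_noeth Y stY hlftY _ (hWaff k.1)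
    · apply le_antisymm le_top
      intro x _
      obtain ⟨z, hz, hxz⟩ := Set.mem_iUnion₂.mp (ht (Set.mem_univ x))
      exact TopologicalSpace.Opens.mem_iSup.mpr ⟨⟨z, hz⟩, hxz⟩
  haveI : TopologicalSpace.NoetherianSpace Y := inferInstance
  -- strata
  set A : Set ↥t → Set Y := fun σ => {x | ∀ k : ↥t, x ∈ Wo k.1 ↔ k ∈ σ} with hA
  set 𝒞 : Set (Set Y) :=
    {C | ∃ σ : Set ↥t, ∃ y ∈ A σ, C = connectedComponentIn (A σ) y} with h𝒞
  haveI : Finite ↥t := t.finite_toSet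
  have h𝒞fin : 𝒞.Finite := by
    have : 𝒞 ⊆ ⋃ σ ∈ (Set.univ : Set (Set ↥t)),
        {C | ∃ y ∈ A σ, C = connectedComponentIn (A σ) y} := by
      rintro C ⟨σ, y, hy, rfl⟩
      exact Set.mem_biUnion (Set.mem_univ σ) ⟨y, hy, rfl⟩
    refine (Set.Finite.biUnion Set.finite_univ fun σ _ => ?_).subset this
    have hfin := aux_finite_connectedComponents (α := ↥(A σ))
    refine (hfin.image (fun D => Subtype.val '' D)).subset ?_
    rintro C ⟨y, hy, rfl⟩
    exact ⟨connectedComponent ⟨y, hy⟩, ⟨⟨y, hy⟩, rfl⟩,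
      (connectedComponentIn_eq_image hy).symm⟩
  -- key construction per stratum
  have hmain : ∀ C ∈ 𝒞, ∃ (S : Scheme) (inc : S ⟶ Y), IsImmersion inc ∧
      ConnectedSpace S ∧ Set.range inc.base = C ∧
      ∃ (F : Scheme) (stF : F ⟶ SpecC)
        (e : pullback f inc ≅ pullback (inc ≫ stY) stF),
        e.hom ≫ pullback.fst (inc ≫ stY) stF = pullback.snd f inc := by
    rintro C ⟨σ, y, hy, rfl⟩
    set C := connectedComponentIn (A σ) y with hCdef
    obtain ⟨z, hz, hyz⟩ := Set.mem_iUnion₂.mp (ht (Set.mem_univ y))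
    have hk₀ : (⟨z, hz⟩ : ↥t) ∈ σ := (hy ⟨z, hz⟩).mp hyz
    set k₀ : ↥t := ⟨z, hz⟩
    have hCA : C ⊆ A σ := connectedComponentIn_subset _ _
    have hconn : _root_.IsConnected C := isConnected_connectedComponentIn_iff.mpr hy
    have hCim : C = Subtype.val '' connectedComponent (⟨y, hy⟩ : ↥(A σ)) :=
      connectedComponentIn_eq_image hy
    obtain ⟨O', hO'op, hO'⟩ := isOpen_induced_iff.mp
      (aux_open_connectedComponent (⟨y, hy⟩ : ↥(A σ)))
    obtain ⟨Z₀, hZ₀cl, hZ₀⟩ := isClosed_induced_iff.mp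
      (isClosed_connectedComponent (x := (⟨y, hy⟩ : ↥(A σ))))
    have hCO : C = O' ∩ A σ := by
      rw [hCim, ← hO', Set.image_preimage_eq_inter_range, Subtype.range_val]
    have hCZ : C = Z₀ ∩ A σ := by
      rw [hCim, ← hZ₀, Set.image_preimage_eq_inter_range, Subtype.range_val]
    set Oσ : Set Y := ⋂ k ∈ σ, (Wo k.1 : Set Y) with hOσ
    set Kσ : Set Y := ⋂ k ∈ σᶜ, ((Wo k.1 : Set Y))ᶜ with hKσ
    have hAOK : A σ = Oσ ∩ Kσ := by
      ext x
      simp only [hA, Set.mem_setOf_eq, hOσ, hKσ, Set.mem_inter_iff, Set.mem_iInter,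
        Set.mem_compl_iff]
      constructor
      · intro h
        exact ⟨fun k hk => (h k).mpr hk, fun k hk hxk => hk ((h k).mp hxk)⟩
      · intro ⟨h1, h2⟩ k
        refine ⟨fun hxk => by_contra fun hk => h2 k hk hxk, fun hk => h1 k hk⟩
    have hOσop : IsOpen Oσ := by
      exact Set.Finite.isOpen_biInter (Set.toFinite _) (fun k _ => (Wo k.1).2)
    have hKσcl : IsClosed Kσ :=
      isClosed_biInter (fun k _ => (Wo k.1).2.isClosed_compl)
    have hOσsub : Oσ ⊆ (Wo k₀.1 : Set Y) := Set.biInter_subset_of_mem hk₀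
    set Ω : Y.Opens := ⟨(Wo k₀.1 : Set Y) ∩ (Oσ ∩ O'),
      ((Wo k₀.1).2.inter (hOσop.inter hO'op))⟩ with hΩ
    have hΩW : Ω ≤ Wo k₀.1 := fun x hx => hx.1
    have hCeq : C = (Z₀ ∩ Kσ) ∩ (Ω : Set Y) := by
      show C = (Z₀ ∩ Kσ) ∩ ((Wo k₀.1 : Set Y) ∩ (Oσ ∩ O'))
      apply Set.Subset.antisymm
      · intro x hx
        have hxA : x ∈ A σ := hCA hx
        have hxO : x ∈ O' := (hCO ▸ hx : x ∈ O' ∩ A σ).1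
        have hxZ : x ∈ Z₀ := (hCZ ▸ hx : x ∈ Z₀ ∩ A σ).1
        have hxOK : x ∈ Oσ ∩ Kσ := hAOK ▸ hxA
        exact ⟨⟨hxZ, hxOK.2⟩, hOσsub hxOK.1, hxOK.1, hxO⟩
      · rintro x ⟨⟨hxZ, hxK⟩, _, hxOσ, hxO⟩
        have hxA : x ∈ A σ := by rw [hAOK]; exact ⟨hxOσ, hxK⟩
        rw [hCZ]; exact ⟨hxZ, hxA⟩
    obtain ⟨S, inc, himm, hconnS, hrange⟩ := aux_subscheme Y (Wo k₀.1) Ω (hWaff k₀.1)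
      hΩW (Z₀ ∩ Kσ) (hZ₀cl.inter hKσcl) C hCeq hconn
    have hsub : Set.range inc.base ⊆ Set.range (WU k₀.1).2.ι.base := by
      rw [hrange, Scheme.Opens.range_ι]
      intro x hx
      exact hWle k₀.1 (hOσsub ((hAOK ▸ (hCA hx) : x ∈ Oσ ∩ Kσ).1))
    obtain ⟨F, stF, e, he⟩ := hdata k₀.1
    obtain ⟨e', he'⟩ := aux_transport stY f (WU k₀.1).2.ι
      (IsOpenImmersion.lift (WU k₀.1).2.ι inc hsub) inc
      (IsOpenImmersion.lift_fac _ _ hsub) stF e he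
    exact ⟨S, inc, himm, hconnS, hrange, F, stF, e', he'⟩
  -- assemble
  haveI : Fintype ↥𝒞 := h𝒞fin.fintype
  choose Sf incf himm hconn hrange hdata2 using fun c : ↥𝒞 => hmain c.1 c.2
  refine ⟨Fintype.card ↥𝒞, fun i => Sf ((Fintype.equivFin ↥𝒞).symm i),
    fun i => incf ((Fintype.equivFin ↥𝒞).symm i), fun i => himm _, fun i => hconn _,
    ?_, fun i => hdata2 _⟩
  intro y
  have existsu : ∃! c : ↥𝒞, y ∈ Set.range (incf c).base := by
    have hyA : ∀ σ : Set ↥t, σ = {k | y ∈ Wo k.1} → y ∈ A σ := by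
      rintro σ rfl k; exact Iff.rfl
    have hyAy : y ∈ A {k | y ∈ Wo k.1} := hyA _ rfl
    have hCy𝒞 : connectedComponentIn (A {k | y ∈ Wo k.1}) y ∈ 𝒞 :=
      ⟨_, y, hyAy, rfl⟩
    refine ⟨⟨_, hCy𝒞⟩, ?_, ?_⟩
    · beta_reduce
      rw [hrange]
      exact mem_connectedComponentIn hyAy
    · intro c hc
      beta_reduce at hc
      rw [hrange] at hc
      obtain ⟨σ', y', hy', hCeq'⟩ := c.2
      have hyC' : y ∈ connectedComponentIn (A σ') y' := by rw [← hCeq']; exact hc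
      have hyA' : y ∈ A σ' := connectedComponentIn_subset _ _ hyC'
      have hσeq : σ' = {k | y ∈ Wo k.1} := by
        ext k
        exact ⟨fun h => (hyA' k).mpr h, fun h => (hyA' k).mp h⟩
      refine Subtype.ext ?_
      show (c : Set Y) = connectedComponentIn (A {k | y ∈ Wo k.1}) y
      rw [hCeq']
      rw [hσeq] at hyC' ⊢
      exact connectedComponentIn_eq hyC'
  obtain ⟨c, hc, hu⟩ := existsu
  refine ⟨Fintype.equivFin ↥𝒞 c, ?_, ?_⟩
  · have h3 : (Fintype.equivFin ↥𝒞).symm ((Fintype.equivFin ↥𝒞) c) = c :=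
      Equiv.symm_apply_apply _ _
    beta_reduce
    rw [h3]
    exact hc
  · intro i hi
    have h2 := hu ((Fintype.equivFin ↥𝒞).symm i) hi
    have h4 : (Fintype.equivFin ↥𝒞) ((Fintype.equivFin ↥𝒞).symm i) = i :=
      Equiv.apply_symm_apply _ _
    rw [← h2, h4]


end
end

section
/- Consider a 2-commutative diagram of categories and functors consisting of two horizontally adjacent squares: V → W → Y on top, U → X → Z on the bottom, with vertical functors V → U, W → X and Y → Z, together with natural isomorphisms making each small square 2-commutative (and hence, by pasting, the outer rectangle 2-commutative). If the right-hand small square is 2-Cartesian, then the left-hand small square is 2-Cartesian if and only if the outer rectangle is 2-Cartesian. -/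
open CategoryTheory

universe v₁ v₂ v₃ v₄ v₅ v₆ u₁ u₂ u₃ u₄ u₅ u₆

section IsoFibre

variable {X : Type u₁} {Y : Type u₂} {Z : Type u₃}
  [Category.{v₁} X] [Category.{v₂} Y] [Category.{v₃} Z]

/-- The iso-fibre product of two functors `F : 𝒳 ⥤ 𝒵` and `G : 𝒴 ⥤ 𝒵`: the category of
triples `(x, y, θ)` with `θ : F(x) ≅ G(y)` an isomorphism, morphisms
`(x, y, θ) → (x', y', θ')` being pairs `(α : x ⟶ x', β : y ⟶ y')` with
`θ' ∘ F(α) = G(β) ∘ θ`. -/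
def IsoFibreProd (F : X ⥤ Z) (G : Y ⥤ Z) :=
  ObjectProperty.FullSubcategory fun c : Comma F G => IsIso c.hom

instance (F : X ⥤ Z) (G : Y ⥤ Z) : Category (IsoFibreProd F G) :=
  ObjectProperty.FullSubcategory.category _

/-- The comparison functor from the corner of a 2-commutative square to the iso-fibre
product of the other two sides. -/
def comparison {W : Type u₄} [Category.{v₄} W]
    (p : W ⥤ X) (q : W ⥤ Y) (F : X ⥤ Z) (G : Y ⥤ Z) (α : p ⋙ F ≅ q ⋙ G) :
    W ⥤ IsoFibreProd F G where
  obj w := ⟨⟨p.obj w, q.obj w, α.hom.app w⟩, inferInstance⟩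
  map {w w'} m := ⟨p.map m, q.map m, α.hom.naturality m⟩

/-- A 2-commutative square of categories is 2-Cartesian if the comparison functor into
the iso-fibre product is an equivalence of categories. -/
def Is2Cartesian {W : Type u₄} [Category.{v₄} W]
    (p : W ⥤ X) (q : W ⥤ Y) (F : X ⥤ Z) (G : Y ⥤ Z) (α : p ⋙ F ≅ q ⋙ G) : Prop :=
  (comparison p q F G α).IsEquivalence

variable {F : X ⥤ Z} {G : Y ⥤ Z}

def IsoFibreProd.asCommaHom {A B : IsoFibreProd F G} (p : A ⟶ B) : A.obj ⟶ B.obj := p.hom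

lemma IsoFibreProd.hom_ext {A B : IsoFibreProd F G} (p q : A ⟶ B)
    (h1 : (asCommaHom p).left = (asCommaHom q).left)
    (h2 : (asCommaHom p).right = (asCommaHom q).right) : p = q :=
  ObjectProperty.hom_ext _ (CommaMorphism.ext h1 h2)

def IsoFibreProd.isoMk' {A B : IsoFibreProd F G} (e : A.obj ≅ B.obj) : A ≅ B :=
  ObjectProperty.isoMk _ e

def IsoFibreProd.asCommaIso {A B : IsoFibreProd F G} (e : A ≅ B) : A.obj ≅ B.obj :=
  (ObjectProperty.ι _).mapIso e

def IsoFibreProd.isoMk {A B : IsoFibreProd F G} (l : A.obj.left ≅ B.obj.left)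
    (r : A.obj.right ≅ B.obj.right)
    (w : F.map l.hom ≫ B.obj.hom = A.obj.hom ≫ G.map r.hom := by aesop_cat) : A ≅ B :=
  isoMk' (Comma.isoMk l r w)


end IsoFibre

section Paste

variable {W : Type u₂} {Y : Type u₃} {U : Type u₄} {X : Type u₅} {Z : Type u₆}
  [Category.{v₂} W] [Category.{v₃} Y] [Category.{v₄} U] [Category.{v₅} X] [Category.{v₆} Z]
  (g : W ⥤ Y) (b : W ⥤ X) (c : Y ⥤ Z) (h : U ⥤ X) (k : X ⥤ Z)
  (β : g ⋙ c ≅ b ⋙ k)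

@[simps]
def pasteFunctor : IsoFibreProd h b ⥤ IsoFibreProd (h ⋙ k) c where
  obj A := ⟨⟨A.obj.left, g.obj A.obj.right, k.map A.obj.hom ≫ β.inv.app A.obj.right⟩, by
    have : IsIso A.obj.hom := A.property
    dsimp; infer_instance⟩
  map {A B} p := ⟨⟨(IsoFibreProd.asCommaHom p).left, g.map (IsoFibreProd.asCommaHom p).right, by
    have w := (IsoFibreProd.asCommaHom p).w
    have n := β.inv.naturality (IsoFibreProd.asCommaHom p).right
    dsimp at w n ⊢
    rw [← Category.assoc, ← k.map_comp, w, k.map_comp, Category.assoc, n, Category.assoc]⟩⟩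
  map_id A := IsoFibreProd.hom_ext _ _ rfl (g.map_id A.obj.right)
  map_comp p q := IsoFibreProd.hom_ext _ _ rfl (g.map_comp (IsoFibreProd.asCommaHom p).right (IsoFibreProd.asCommaHom q).right)


open IsoFibreProd in
theorem pasteFunctor_isEquivalence
    (hE : (comparison b g k c β.symm).IsEquivalence) :
    (pasteFunctor g b c h k β).IsEquivalence := by
  haveI := hE
  have bmap_eq : ∀ {A B : IsoFibreProd h b} (p : A ⟶ B),
      A.obj.hom ≫ b.map (asCommaHom p).right = h.map (asCommaHom p).left ≫ B.obj.hom :=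
    fun p => ((asCommaHom p).w).symm
  haveI : (pasteFunctor g b c h k β).Faithful := by
    refine ⟨fun {A B} p q hpq => ?_⟩
    haveI : IsIso A.obj.hom := A.property
    have h1' := congrArg (fun m => (asCommaHom m).left) hpq
    have h2' := congrArg (fun m => (asCommaHom m).right) hpq
    have h1 : (asCommaHom p).left = (asCommaHom q).left := h1'
    have h2 : g.map (asCommaHom p).right = g.map (asCommaHom q).right := h2'
    have h3 : b.map (asCommaHom p).right = b.map (asCommaHom q).right := by
      rw [← cancel_epi A.obj.hom, bmap_eq p, bmap_eq q, h1]
    exact hom_ext p q h1 ((comparison b g k c β.symm).map_injective (hom_ext _ _ h3 h2))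
  haveI : (pasteFunctor g b c h k β).Full := by
    refine ⟨fun {A B} q => ?_⟩
    haveI : IsIso A.obj.hom := A.property
    haveI : IsIso B.obj.hom := B.property
    have wq : k.map (h.map (asCommaHom q).left) ≫ (k.map B.obj.hom ≫ β.inv.app B.obj.right)
        = (k.map A.obj.hom ≫ β.inv.app A.obj.right) ≫ c.map (asCommaHom q).right :=
      (asCommaHom q).w
    let m : (comparison b g k c β.symm).obj A.obj.right ⟶
        (comparison b g k c β.symm).obj B.obj.right :=
      ⟨⟨(inv A.obj.hom : b.obj A.obj.right ⟶ h.obj A.obj.left) ≫ h.map (asCommaHom q).left ≫ B.obj.hom, (asCommaHom q).right, by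
        show k.map (inv A.obj.hom ≫ h.map (asCommaHom q).left ≫ B.obj.hom) ≫ β.inv.app B.obj.right
          = β.inv.app A.obj.right ≫ c.map (asCommaHom q).right
        erw [k.map_comp, k.map_comp, Category.assoc, Category.assoc, wq]
        simp; rfl⟩⟩
    obtain ⟨ψ, hψ⟩ := (comparison b g k c β.symm).map_surjective m
    have hψ1' := congrArg (fun m => (asCommaHom m).left) hψ
    have hψ2' := congrArg (fun m => (asCommaHom m).right) hψ
    have hψ1 : b.map ψ = inv A.obj.hom ≫ h.map (asCommaHom q).left ≫ B.obj.hom := hψ1'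
    have hψ2 : g.map ψ = (asCommaHom q).right := hψ2'
    refine ⟨⟨⟨(asCommaHom q).left, ψ, by rw [hψ1, IsIso.hom_inv_id_assoc]; rfl⟩⟩, ?_⟩
    exact hom_ext _ _ rfl hψ2
  haveI : (pasteFunctor g b c h k β).EssSurj := by
    refine ⟨fun C => ?_⟩
    haveI : IsIso C.obj.hom := C.property
    let T : IsoFibreProd k c := ⟨⟨h.obj C.obj.left, C.obj.right, C.obj.hom⟩, C.property⟩
    obtain ⟨w, ⟨e⟩⟩ := Functor.EssSurj.mem_essImage (F := comparison b g k c β.symm) T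
    let e' := asCommaIso e
    let i₁ : b.obj w ≅ h.obj C.obj.left := Comma.leftIso e'
    let i₂ : g.obj w ≅ C.obj.right := Comma.rightIso e'
    have we : k.map i₁.hom ≫ C.obj.hom = β.inv.app w ≫ c.map i₂.hom := e'.hom.w
    let A : IsoFibreProd h b := ⟨⟨C.obj.left, w, i₁.inv⟩, inferInstance⟩
    refine ⟨A, ⟨isoMk (Iso.refl _) i₂ ?_⟩⟩
    show (h ⋙ k).map (𝟙 C.obj.left) ≫ C.obj.hom
        = (k.map i₁.inv ≫ β.inv.app w) ≫ c.map i₂.hom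
    rw [CategoryTheory.Functor.map_id, Category.id_comp, Category.assoc, ← we,
      ← Category.assoc, ← k.map_comp, i₁.inv_hom_id, k.map_id, Category.id_comp]
  exact { }

section Main
variable {V : Type u₁} [Category.{v₁} V]
  (f : V ⥤ W) (a : V ⥤ U) (α : f ⋙ b ≅ a ⋙ h)

open IsoFibreProd in
def mainIso :
    comparison a (f ⋙ g) (h ⋙ k) c
      ((Functor.associator a h k).symm ≪≫ Functor.isoWhiskerRight α.symm k ≪≫
        Functor.associator f b k ≪≫ Functor.isoWhiskerLeft f β.symm ≪≫
        (Functor.associator f g c).symm)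
      ≅ comparison a f h b α.symm ⋙ pasteFunctor g b c h k β :=
  NatIso.ofComponents
    (fun v => isoMk (Iso.refl _) (Iso.refl _) (by
      show (h ⋙ k).map (𝟙 _) ≫ (k.map (α.inv.app v) ≫ β.inv.app (f.obj v))
          = (𝟙 _ ≫ k.map (α.inv.app v) ≫ (𝟙 _ ≫ β.inv.app (f.obj v) ≫ 𝟙 _)) ≫ c.map (𝟙 _)
      simp))
    (fun {v v'} m => hom_ext _ _
      (by show a.map m ≫ 𝟙 _ = 𝟙 _ ≫ a.map m; simp)
      (by show g.map (f.map m) ≫ 𝟙 _ = 𝟙 _ ≫ g.map (f.map m); simp))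
end Main



/-- **Statement 12.** Given a 2-commutative diagram of categories consisting of two
horizontally adjacent squares (top row `V → W → Y`, bottom row `U → X → Z`, vertical
functors `a : V ⥤ U`, `b : W ⥤ X`, `c : Y ⥤ Z`, with natural isomorphisms
`α : f ⋙ b ≅ a ⋙ h` and `β : g ⋙ c ≅ b ⋙ k` for the two small squares), if the
right-hand square is 2-Cartesian then the left-hand square is 2-Cartesian if and only if
the outer rectangle (with its pasted natural isomorphism) is 2-Cartesian. -/
theorem stmt_12
    {V : Type u₁} {W : Type u₂} {Y : Type u₃} {U : Type u₄} {X : Type u₅} {Z : Type u₆}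
    [Category.{v₁} V] [Category.{v₂} W] [Category.{v₃} Y]
    [Category.{v₄} U] [Category.{v₅} X] [Category.{v₆} Z]
    (f : V ⥤ W) (g : W ⥤ Y) (a : V ⥤ U) (b : W ⥤ X) (c : Y ⥤ Z)
    (h : U ⥤ X) (k : X ⥤ Z)
    (α : f ⋙ b ≅ a ⋙ h) (β : g ⋙ c ≅ b ⋙ k)
    (hright : Is2Cartesian b g k c β.symm) :
    Is2Cartesian a f h b α.symm ↔
      Is2Cartesian a (f ⋙ g) (h ⋙ k) c
        ((Functor.associator a h k).symm ≪≫ Functor.isoWhiskerRight α.symm k ≪≫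
          Functor.associator f b k ≪≫ Functor.isoWhiskerLeft f β.symm ≪≫
          (Functor.associator f g c).symm) := by
  have hΦ := pasteFunctor_isEquivalence g b c h k β hright
  rw [Is2Cartesian, Is2Cartesian,
    Functor.isEquivalence_iff_of_iso (mainIso g b c h k β f a α)]
  constructor
  · intro hl
    haveI := hl; haveI := hΦ
    infer_instance
  · intro hr
    haveI := hΦ; haveI := hr
    exact Functor.isEquivalence_of_comp_right (comparison a f h b α.symm)
      (pasteFunctor g b c h k β)
end Paste
end
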